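/- For H ∈ (1/2, 1) and real numbers 0 < s ≤ t, the identity 2·H·(2H-1) · ∫₀^s (s-a)^{1/2} ((t+a)^{2H-2} + (t-a)^{2H-2}) da = H · ∫₀^s (s-a)^{-1/2} ((t+a)^{2H-1} - (t-a)^{2H-1}) da holds. -/

import Mathlib

open MeasureTheory intervalIntegral Filter Topology Set

theorem stmt2 (H s t : ℝ) (hH1 : 1/2 < H) (hH2 : H < 1) (hs : 0 < s) (hst : s ≤ t) :
    2 * H * (2*H - 1) *
      ∫ a in (0:ℝ)..s, (s - a) ^ ((1:ℝ)/2) * ((t + a) ^ (2*H - 2) + (t - a) ^ (2*H - 2))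
    = H * ∫ a in (0:ℝ)..s, (s - a) ^ (-(1:ℝ)/2) * ((t + a) ^ (2*H - 1) - (t - a) ^ (2*H - 1)) := by
  have ht : 0 < t := lt_of_lt_of_le hs hst
  have hc1 : (-1:ℝ) < 2*H - 2 := by linarith
  have hexp : (0:ℝ) ≤ 2*H - 1 := by linarith
  set φ : ℝ → ℝ := fun a => (s - a) ^ ((1:ℝ)/2) *
      ((t + a) ^ (2*H - 2) + (t - a) ^ (2*H - 2)) with hφ
  set ψ : ℝ → ℝ := fun a => (s - a) ^ (-(1:ℝ)/2) *
      ((t + a) ^ (2*H - 1) - (t - a) ^ (2*H - 1)) with hψ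
  set V : ℝ → ℝ := fun a => (t + a) ^ (2*H - 1) - (t - a) ^ (2*H - 1) with hV
  set F : ℝ → ℝ := fun u => ∫ a in (0:ℝ)..u, φ a with hF
  set G : ℝ → ℝ := fun u => ∫ a in (0:ℝ)..u, ψ a with hG
  -- continuity facts
  have hsqrt_cont : Continuous (fun a : ℝ => (s - a) ^ ((1:ℝ)/2)) :=
    (continuous_const.sub continuous_id).rpow_const (fun x => Or.inr (by norm_num))
  have hV_cont : Continuous V := by
    refine Continuous.sub ?_ ?_
    · exact (continuous_const.add continuous_id).rpow_const (fun x => Or.inr hexp)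
    · exact (continuous_const.sub continuous_id).rpow_const (fun x => Or.inr hexp)
  -- integrability of φ on [0,s]
  have h1 : IntervalIntegrable (fun a => (t - a) ^ (2*H - 2)) volume 0 s := by
    have := (intervalIntegrable_rpow' hc1 (a := t) (b := t - s)).comp_sub_left t
    simpa using this
  have h2 : IntervalIntegrable (fun a => (t + a) ^ (2*H - 2)) volume 0 s := by
    have := (intervalIntegrable_rpow' hc1 (a := t) (b := t + s)).comp_add_left t
    simpa using this
  have hintφ : IntervalIntegrable φ volume 0 s :=
    (h2.add h1).continuousOn_mul hsqrt_cont.continuousOn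
  -- integrability of ψ on [0,s]
  have h3 : IntervalIntegrable (fun a => (s - a) ^ (-(1:ℝ)/2)) volume 0 s := by
    have := (intervalIntegrable_rpow' (by norm_num : (-1:ℝ) < -(1:ℝ)/2)
      (a := s) (b := 0)).comp_sub_left s
    simpa using this
  have hintψ : IntervalIntegrable ψ volume 0 s := h3.mul_continuousOn hV_cont.continuousOn
  -- key identity on [0, s)
  have key : ∀ u ∈ Ico (0:ℝ) s,
      (2*H - 1) * F u = (s - u) ^ ((1:ℝ)/2) * V u + (1/2) * G u := by
    rintro u ⟨hu0, hus⟩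
    have hU : ∀ x ∈ Set.uIcc (0:ℝ) u,
        HasDerivAt (fun a : ℝ => (s - a) ^ ((1:ℝ)/2))
          (-1 * ((1:ℝ)/2) * (s - x) ^ ((1:ℝ)/2 - 1)) x := by
      intro x hx
      rw [Set.uIcc_of_le hu0] at hx
      have hsx : s - x ≠ 0 := ne_of_gt (by linarith [hx.2])
      exact ((hasDerivAt_id x).const_sub s).rpow_const (Or.inl hsx)
    have hVd : ∀ x ∈ Set.uIcc (0:ℝ) u,
        HasDerivAt V
          (1 * (2*H - 1) * (t + x) ^ (2*H - 1 - 1) -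
            -1 * (2*H - 1) * (t - x) ^ (2*H - 1 - 1)) x := by
      intro x hx
      rw [Set.uIcc_of_le hu0] at hx
      have hA : HasDerivAt (fun a : ℝ => (t + a) ^ (2*H - 1))
          (1 * (2*H - 1) * (t + x) ^ (2*H - 1 - 1)) x :=
        ((hasDerivAt_id x).const_add t).rpow_const (Or.inl (ne_of_gt (by simp only [id_eq]; linarith [hx.1])))
      have hB : HasDerivAt (fun a : ℝ => (t - a) ^ (2*H - 1))
          (-1 * (2*H - 1) * (t - x) ^ (2*H - 1 - 1)) x :=
        ((hasDerivAt_id x).const_sub t).rpow_const (Or.inl (ne_of_gt (by simp only [id_eq]; linarith [hx.2])))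
      exact hA.sub hB
    have hU' : IntervalIntegrable
        (fun x : ℝ => -1 * ((1:ℝ)/2) * (s - x) ^ ((1:ℝ)/2 - 1)) volume 0 u := by
      apply ContinuousOn.intervalIntegrable
      apply continuousOn_const.mul
      apply ContinuousOn.rpow_const
      · exact continuousOn_const.sub continuousOn_id
      · intro x hx
        rw [Set.uIcc_of_le hu0] at hx
        exact Or.inl (ne_of_gt (by linarith [hx.2]))
    have hV' : IntervalIntegrable
        (fun x : ℝ => 1 * (2*H - 1) * (t + x) ^ (2*H - 1 - 1) -
          -1 * (2*H - 1) * (t - x) ^ (2*H - 1 - 1)) volume 0 u := by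
      apply ContinuousOn.intervalIntegrable
      apply ContinuousOn.sub
      · apply continuousOn_const.mul
        apply ContinuousOn.rpow_const (continuousOn_const.add continuousOn_id)
        intro x hx
        rw [Set.uIcc_of_le hu0] at hx
        exact Or.inl (ne_of_gt (by show (0:ℝ) < t + x; linarith [hx.1]))
      · apply continuousOn_const.mul
        apply ContinuousOn.rpow_const (continuousOn_const.sub continuousOn_id)
        intro x hx
        rw [Set.uIcc_of_le hu0] at hx
        exact Or.inl (ne_of_gt (by show (0:ℝ) < t - x; linarith [hx.2]))
    have parts := intervalIntegral.integral_mul_deriv_eq_deriv_mul hU hVd hU' hV'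
    have h21 : 2*H - 1 - 1 = 2*H - 2 := by ring
    have h12 : (1:ℝ)/2 - 1 = -(1:ℝ)/2 := by norm_num
    have e1 : (∫ x in (0:ℝ)..u, (s - x) ^ ((1:ℝ)/2) *
        (1 * (2*H - 1) * (t + x) ^ (2*H - 1 - 1) -
          -1 * (2*H - 1) * (t - x) ^ (2*H - 1 - 1))) = (2*H - 1) * F u := by
      rw [hF]
      simp only
      rw [← intervalIntegral.integral_const_mul]
      apply intervalIntegral.integral_congr
      intro x _
      simp only [hφ, h21]
      ring
    have e2 : (∫ x in (0:ℝ)..u, (-1 * ((1:ℝ)/2) * (s - x) ^ ((1:ℝ)/2 - 1)) * V x)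
        = -((1/2) * G u) := by
      rw [hG]
      simp only
      rw [← intervalIntegral.integral_const_mul, ← intervalIntegral.integral_neg]
      apply intervalIntegral.integral_congr
      intro x _
      simp only [hψ, hV, h12]
      ring
    rw [e1, e2] at parts
    have hV0 : V 0 = 0 := by simp [hV]
    rw [hV0] at parts
    rw [parts]
    ring
  -- limits as u → s⁻ within Ico 0 s
  have l_neBot : (𝓝[Ico (0:ℝ) s] s).NeBot := right_nhdsWithin_Ico_neBot hs
  have hsub : Ico (0:ℝ) s ⊆ Set.uIcc 0 s := by
    rw [Set.uIcc_of_le hs.le]; exact Ico_subset_Icc_self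
  have hmem : s ∈ Set.uIcc (0:ℝ) s := by
    rw [Set.uIcc_of_le hs.le]; exact right_mem_Icc.2 hs.le
  have hFc : ContinuousOn F (Set.uIcc 0 s) := by
    apply intervalIntegral.continuousOn_primitive_interval
    rw [Set.uIcc_of_le hs.le]
    exact (intervalIntegrable_iff_integrableOn_Icc_of_le hs.le).mp hintφ
  have hGc : ContinuousOn G (Set.uIcc 0 s) := by
    apply intervalIntegral.continuousOn_primitive_interval
    rw [Set.uIcc_of_le hs.le]
    exact (intervalIntegrable_iff_integrableOn_Icc_of_le hs.le).mp hintψ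
  have tF : Tendsto F (𝓝[Ico (0:ℝ) s] s) (𝓝 (F s)) :=
    ((hFc.continuousWithinAt hmem).mono_left (nhdsWithin_mono _ hsub))
  have tG : Tendsto G (𝓝[Ico (0:ℝ) s] s) (𝓝 (G s)) :=
    ((hGc.continuousWithinAt hmem).mono_left (nhdsWithin_mono _ hsub))
  have tB : Tendsto (fun u : ℝ => (s - u) ^ ((1:ℝ)/2) * V u)
      (𝓝[Ico (0:ℝ) s] s) (𝓝 0) := by
    have hcont : Continuous (fun u : ℝ => (s - u) ^ ((1:ℝ)/2) * V u) :=
      hsqrt_cont.mul hV_cont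
    have := (hcont.tendsto s).mono_left (nhdsWithin_le_nhds (s := Ico (0:ℝ) s))
    simpa [Real.zero_rpow (by norm_num : (1:ℝ)/2 ≠ 0)] using this
  have hEq : (fun u => (2*H - 1) * F u) =ᶠ[𝓝[Ico (0:ℝ) s] s]
      (fun u => (s - u) ^ ((1:ℝ)/2) * V u + (1/2) * G u) :=
    eventually_of_mem self_mem_nhdsWithin key
  have main : (2*H - 1) * F s = 0 + (1/2) * G s :=
    tendsto_nhds_unique ((tF.const_mul _).congr' hEq) (tB.add (tG.const_mul _))
  rw [zero_add] at main
  show 2 * H * (2*H - 1) * F s = H * G s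
  linear_combination (2*H) * main
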